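/- Let X be a finite topological T₀-space and let φ : ℝ≥0 × X → X be a semiflow, and set r := φ(1,·) : X → X. Then the image r(X) is a strong deformation retract of X: there is a homotopy H : [0,1] × X → X relative to the subset r(X) from the identity map of X to the map r (so H(0,·) = id, H(1,·) = r, and H(s,a) = a for all s ∈ [0,1] and a ∈ r(X)). -/

import Mathlib

open NNReal

/-- A semiflow on a topological space `X`: a jointly continuous map
`φ : ℝ≥0 × X → X` with `φ 0 x = x` and `φ s (φ t x) = φ (s + t) x`. -/
def IsSemiflow {X : Type*} [TopologicalSpace X] (φ : ℝ≥0 → X → X) : Prop :=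
  Continuous (fun p : ℝ≥0 × X => φ p.1 p.2) ∧
  (∀ x : X, φ 0 x = x) ∧
  ∀ (s t : ℝ≥0) (x : X), φ s (φ t x) = φ (s + t) x

/-- A semiflow is trivial if every time-`t` map is the identity. -/
def IsTrivialSemiflow {X : Type*} [TopologicalSpace X] (φ : ℝ≥0 → X → X) : Prop :=
  ∀ (t : ℝ≥0) (x : X), φ t x = x

/-- `x` is a down beat point: `U_x \ {x}` has a greatest element in the
specialization order (`y ⤳ x` means `y ≤ x`, i.e. `y ∈ U_x`). -/
def IsDownBeatPoint {X : Type*} [TopologicalSpace X] (x : X) : Prop :=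
  ∃ m : X, (m ⤳ x ∧ m ≠ x) ∧ ∀ y : X, y ⤳ x → y ≠ x → y ⤳ m

/-- `x` is an up beat point: `F_x \ {x}` has a least element in the
specialization order. -/
def IsUpBeatPoint {X : Type*} [TopologicalSpace X] (x : X) : Prop :=
  ∃ m : X, (x ⤳ m ∧ m ≠ x) ∧ ∀ y : X, x ⤳ y → y ≠ x → m ⤳ y

section Aux

variable {X : Type*} [TopologicalSpace X]

/-- Short-time forward invariance of minimal open sets. -/
lemma aux_short_time [Finite X] (y : X) (φ : ℝ≥0 → X → X)
    (hc : Continuous (fun p : ℝ≥0 × X => φ p.1 p.2)) (h0 : ∀ x : X, φ 0 x = x) :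
    ∃ ε : ℝ≥0, 0 < ε ∧ ∀ t : ℝ≥0, t < ε → ∀ z : X, z ⤳ y → φ t z ⤳ y := by
  have hU : IsOpen (nhdsKer {y}) := isOpen_nhdsKer
  have hW : IsOpen ((fun p : ℝ≥0 × X => φ p.1 p.2) ⁻¹' nhdsKer {y}) := hU.preimage hc
  have hmem : ((0 : ℝ≥0), y) ∈ (fun p : ℝ≥0 × X => φ p.1 p.2) ⁻¹' nhdsKer {y} := by
    simp [h0, subset_nhdsKer (Set.mem_singleton y)]
  rw [isOpen_prod_iff] at hW
  obtain ⟨A, B, hA, hB, h0A, hyB, hsub⟩ := hW 0 y hmem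
  obtain ⟨ε, hε, hball⟩ := Metric.isOpen_iff.1 hA 0 h0A
  refine ⟨⟨ε, hε.le⟩, by exact_mod_cast hε, fun t ht z hz => ?_⟩
  have htA : t ∈ A := hball (by simpa [Metric.mem_ball, NNReal.dist_eq] using
    (by exact_mod_cast ht : (t : ℝ) < ε))
  have hzB : z ∈ B := (nhdsKer_minimal (Set.singleton_subset_iff.2 hyB) hB)
    (mem_nhdsKer_singleton.2 hz)
  exact mem_nhdsKer_singleton.1 (hsub (Set.mk_mem_prod htA hzB))

/-- All-time forward invariance of minimal open sets. -/
lemma aux_all_time [Finite X] (y : X) (φ : ℝ≥0 → X → X)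
    (hc : Continuous (fun p : ℝ≥0 × X => φ p.1 p.2)) (h0 : ∀ x : X, φ 0 x = x)
    (hadd : ∀ (s t : ℝ≥0) (x : X), φ s (φ t x) = φ (s + t) x) :
    ∀ t : ℝ≥0, ∀ z : X, z ⤳ y → φ t z ⤳ y := by
  obtain ⟨ε, hε, hA⟩ := aux_short_time y φ hc h0
  have hhalf : 0 < ε / 2 := by positivity
  have hhalflt : ε / 2 < ε := NNReal.half_lt_self hε.ne'
  have key : ∀ n : ℕ, ∀ t : ℝ≥0, t ≤ n * (ε / 2) → ∀ z : X, z ⤳ y → φ t z ⤳ y := by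
    intro n
    induction n with
    | zero =>
      intro t ht z hz
      have : t = 0 := le_antisymm (by simpa using ht) zero_le
      simpa [this, h0] using hz
    | succ n ih =>
      intro t ht z hz
      by_cases hle : t < ε
      · exact hA t hle z hz
      · push_neg at hle
        have hhalf_le : ε / 2 ≤ t := le_trans hhalflt.le hle
        have ht' : t - ε / 2 ≤ n * (ε / 2) := by
          rw [tsub_le_iff_right]
          calc t ≤ (n + 1 : ℕ) * (ε / 2) := ht
          _ = n * (ε / 2) + ε / 2 := by push_cast; ring
        have h1 : φ (t - ε / 2) z ⤳ y := ih (t - ε / 2) ht' z hz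
        have h2 : φ (ε / 2) (φ (t - ε / 2) z) ⤳ y := hA (ε / 2) hhalflt _ h1
        rwa [hadd, add_tsub_cancel_of_le hhalf_le] at h2
  intro t z hz
  obtain ⟨n, hn⟩ := exists_nat_ge (t / (ε / 2))
  refine key n t ?_ z hz
  calc t = t / (ε / 2) * (ε / 2) := by rw [div_mul_cancel₀ _ hhalf.ne']
  _ ≤ n * (ε / 2) := mul_le_mul_left hn _

/-- Orbits are monotone decreasing in the specialization preorder. -/
lemma aux_mono [Finite X] (φ : ℝ≥0 → X → X)
    (hc : Continuous (fun p : ℝ≥0 × X => φ p.1 p.2)) (h0 : ∀ x : X, φ 0 x = x)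
    (hadd : ∀ (s t : ℝ≥0) (x : X), φ s (φ t x) = φ (s + t) x)
    (x : X) {s t : ℝ≥0} (hst : s ≤ t) : φ t x ⤳ φ s x := by
  have := aux_all_time (φ s x) φ hc h0 hadd (t - s) (φ s x) specializes_rfl
  rwa [hadd, tsub_add_cancel_of_le hst] at this

/-- Any point in the image of a positive-time map is a fixed point of the semiflow. -/
lemma aux_fixed [Finite X] [T0Space X] (φ : ℝ≥0 → X → X)
    (hc : Continuous (fun p : ℝ≥0 × X => φ p.1 p.2)) (h0 : ∀ x : X, φ 0 x = x)
    (hadd : ∀ (s t : ℝ≥0) (x : X), φ s (φ t x) = φ (s + t) x)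
    (x : X) (s : ℝ≥0) : φ s (φ 1 x) = φ 1 x := by
  -- pigeonhole on the orbit over `(0,1)`
  have : Infinite (Set.Ioo (0 : ℝ≥0) 1) := Set.Ioo.infinite (by norm_num)
  obtain ⟨u, v, huv, heq⟩ :=
    Finite.exists_ne_map_eq_of_infinite (fun t : Set.Ioo (0 : ℝ≥0) 1 => φ t.1 x)
  -- wlog `u < v`
  wlog hlt : (u : ℝ≥0) < v generalizing u v
  · exact this v u huv.symm heq.symm
      (lt_of_le_of_ne (not_lt.1 hlt) (fun h => huv (Subtype.ext h.symm)))
  set a := φ u.1 x with ha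
  have hd : 0 < v.1 - u.1 := tsub_pos_of_lt hlt
  have hper : φ (v.1 - u.1) a = a := by
    rw [ha, hadd, tsub_add_cancel_of_le hlt.le]
    exact heq.symm
  -- `a` is fixed for all times
  have hfix : ∀ t : ℝ≥0, φ t a = a := by
    have hmul : ∀ n : ℕ, φ (n * (v.1 - u.1)) a = a := by
      intro n
      induction n with
      | zero => simpa using h0 a
      | succ n ih =>
        have : φ (v.1 - u.1) (φ (n * (v.1 - u.1)) a) = φ (v.1 - u.1) a := by rw [ih]
        rwa [hadd, hper, show (v.1 - u.1) + n * (v.1 - u.1) = (n + 1 : ℕ) * (v.1 - u.1)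
          by push_cast; ring] at this
    intro t
    obtain ⟨n, hn⟩ := exists_nat_ge (t / (v.1 - u.1))
    have htn : t ≤ n * (v.1 - u.1) := by
      calc t = t / (v.1 - u.1) * (v.1 - u.1) := by rw [div_mul_cancel₀ _ hd.ne']
      _ ≤ n * (v.1 - u.1) := mul_le_mul_left hn _
    have h1 : φ (n * (v.1 - u.1)) a ⤳ φ t a := aux_mono φ hc h0 hadd a htn
    have h2 : φ t a ⤳ φ 0 a := aux_mono φ hc h0 hadd a zero_le
    rw [hmul n] at h1
    rw [h0 a] at h2
    exact (h2.antisymm h1).eq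
  -- hence `φ 1 x = a` and is fixed
  have h1a : φ 1 x = a := by
    have := hfix (1 - u.1)
    rwa [ha, hadd, tsub_add_cancel_of_le u.2.2.le] at this
  rw [h1a, hfix s]

end Aux


/-- For a semiflow `φ` on a finite `T₀`-space, the image of the time-one map
`r := φ 1` is a strong deformation retract of `X`: there is a homotopy `H`
relative to `r(X)` from the identity to `r`. -/
theorem semiflow_time_one_strong_deformation_retract {X : Type*} [TopologicalSpace X]
    [Finite X] [T0Space X] (φ : ℝ≥0 → X → X) (hφ : IsSemiflow φ) :
    ∃ H : unitInterval → X → X,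
      Continuous (fun p : unitInterval × X => H p.1 p.2) ∧
      (∀ x : X, H 0 x = x) ∧
      (∀ x : X, H 1 x = φ 1 x) ∧
      ∀ (s : unitInterval), ∀ a ∈ Set.range (φ 1), H s a = a := by
  obtain ⟨hc, h0, hadd⟩ := hφ
  refine ⟨fun s x => φ ⟨s.1, s.2.1⟩ x, ?_, ?_, ?_, ?_⟩
  · have hι : Continuous (fun s : unitInterval => (⟨s.1, s.2.1⟩ : ℝ≥0)) :=
      continuous_subtype_val.subtype_mk _
    exact hc.comp ((hι.comp continuous_fst).prodMk continuous_snd)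
  · intro x
    show φ ⟨((0 : unitInterval) : ℝ), (0 : unitInterval).2.1⟩ x = x
    have : (⟨((0 : unitInterval) : ℝ), (0 : unitInterval).2.1⟩ : ℝ≥0) = 0 := by
      ext; simp
    rw [this]; exact h0 x
  · intro x
    show φ ⟨((1 : unitInterval) : ℝ), (1 : unitInterval).2.1⟩ x = φ 1 x
    have : (⟨((1 : unitInterval) : ℝ), (1 : unitInterval).2.1⟩ : ℝ≥0) = 1 := by
      ext; simp
    rw [this]; rfl
  · rintro s a ⟨x, rfl⟩
    exact aux_fixed φ hc h0 hadd x _
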